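/- For every even integer r ≥ 4 and every integer h ≥ 1, the graph obtained from AT(r,h) by deleting all vertical edges joining (i,j) and (i,j+1) for which i + j is even (parity of i taken via its representative in {0,…,r−1}) has exactly r/2 connected components, and each connected component (with its induced subgraph structure) is isomorphic to the path graph P_{4h+4} on 4h + 4 vertices. -/

import Mathlib

/-- The armchair nanotube `AT(r,h)` with `r` columns of hexagons, each containing `h` hexagons:
vertex set `ZMod r × {0,…,2h+1}`; vertical edges join `(i,j)` and `(i,j+1)`, and horizontal
edges join `(i,j)` and `(i+1,j)` when `i + j` is even. -/
def AT (r h : ℕ) : SimpleGraph (ZMod r × Fin (2 * h + 2)) :=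
  SimpleGraph.fromRel (fun p q =>
    (p.1 = q.1 ∧ (q.2 : ℕ) = (p.2 : ℕ) + 1) ∨
    (p.2 = q.2 ∧ q.1 = p.1 + 1 ∧ Even (p.1.val + (p.2 : ℕ))))

/-- The graph obtained from `AT(r,h)` by deleting all vertical edges joining `(i,j)` and
`(i,j+1)` for which `i + j` is even. -/
def ATdelVertEven (r h : ℕ) : SimpleGraph (ZMod r × Fin (2 * h + 2)) where
  Adj p q := (AT r h).Adj p q ∧ ¬ (p.1 = q.1 ∧ Even (p.1.val + min (p.2 : ℕ) (q.2 : ℕ)))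
  symm := ⟨fun p q hpq => ⟨(AT r h).symm.symm p q hpq.1, by
    intro hc
    exact hpq.2 ⟨hc.1.symm, by rw [min_comm, ← hc.1]; exact hc.2⟩⟩⟩
  loopless := ⟨fun p hp => (AT r h).loopless.irrefl p hp.1⟩

namespace ATaux

lemma ATdel_adj (r h : ℕ) (p q : ZMod r × Fin (2 * h + 2)) :
    (ATdelVertEven r h).Adj p q ↔
      ((p ≠ q ∧ (((p.1 = q.1 ∧ (q.2 : ℕ) = (p.2 : ℕ) + 1) ∨
        (p.2 = q.2 ∧ q.1 = p.1 + 1 ∧ Even (p.1.val + (p.2 : ℕ)))) ∨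
        ((q.1 = p.1 ∧ (p.2 : ℕ) = (q.2 : ℕ) + 1) ∨
        (q.2 = p.2 ∧ p.1 = q.1 + 1 ∧ Even (q.1.val + (q.2 : ℕ)))))) ∧
      ¬ (p.1 = q.1 ∧ Even (p.1.val + min (p.2 : ℕ) (q.2 : ℕ)))) := by
  show ((AT r h).Adj p q ∧ _) ↔ _
  rw [AT, SimpleGraph.fromRel_adj]

def gmap (r h : ℕ) (x : Fin (r / 2) × Fin (4 * h + 4)) : ZMod r × Fin (2 * h + 2) :=
  (((2 * x.1.val + (x.2.val + 1) / 2 : ℕ) : ZMod r),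
    ⟨x.2.val / 2, by have := x.2.isLt; omega⟩)

lemma modeq_two {r a b : ℕ} (hre : Even r) (hab : a ≡ b [MOD r]) : a % 2 = b % 2 :=
  hab.of_dvd hre.two_dvd

lemma even_val_add {r : ℕ} (hre : Even r) (hr : 0 < r) (n j : ℕ) :
    Even ((n : ZMod r).val + j) ↔ Even (n + j) := by
  haveI : NeZero r := ⟨hr.ne'⟩
  rw [ZMod.val_natCast]
  have h2 : n % r % 2 = n % 2 := modeq_two hre (Nat.mod_modEq n r)
  rw [Nat.even_iff, Nat.even_iff]
  omega

lemma cast_ne {r : ℕ} (hre : Even r) {a b : ℕ} (hab : a % 2 ≠ b % 2) :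
    (a : ZMod r) ≠ (b : ZMod r) := by
  intro hc
  exact hab (modeq_two hre ((ZMod.natCast_eq_natCast_iff _ _ _).mp hc))

lemma twoc_eq {r : ℕ} {c c' : ℕ} (hc : 2 * c < r) (hc' : 2 * c' < r)
    (hm : 2 * c ≡ 2 * c' [MOD r]) : c = c' := by
  have := hm
  unfold Nat.ModEq at this
  rw [Nat.mod_eq_of_lt hc, Nat.mod_eq_of_lt hc'] at this
  omega

section main
variable {r h : ℕ}

/-- If the underlying relation of `AT` holds from `gmap x` to `gmap y` (and the edge is
not a deleted one), then `y` is the successor of `x` on the same path. -/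
lemma rel_aux (hr : 4 ≤ r) (hre : Even r) (x y : Fin (r / 2) × Fin (4 * h + 4))
    (hrel : ((gmap r h x).1 = (gmap r h y).1 ∧
        ((gmap r h y).2 : ℕ) = ((gmap r h x).2 : ℕ) + 1) ∨
      ((gmap r h x).2 = (gmap r h y).2 ∧ (gmap r h y).1 = (gmap r h x).1 + 1 ∧
        Even ((gmap r h x).1.val + ((gmap r h x).2 : ℕ))))
    (hdel : ¬ ((gmap r h x).1 = (gmap r h y).1 ∧
      Even ((gmap r h x).1.val + min ((gmap r h x).2 : ℕ) ((gmap r h y).2 : ℕ)))) :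
    x.1 = y.1 ∧ x.2.val + 1 = y.2.val := by
  obtain ⟨c, k⟩ := x
  obtain ⟨c', k'⟩ := y
  have hck : 2 * c.val < r := by have := c.isLt; omega
  have hck' : 2 * c'.val < r := by have := c'.isLt; omega
  have hkl : k.val < 4 * h + 4 := k.isLt
  have hkl' : k'.val < 4 * h + 4 := k'.isLt
  -- notation
  set N1 : ℕ := 2 * c.val + (k.val + 1) / 2 with hN1
  set N2 : ℕ := 2 * c'.val + (k'.val + 1) / 2 with hN2
  rcases hrel with ⟨h1, h2⟩ | ⟨h1, h2, h3⟩
  · -- vertical edge: same column, j' = j + 1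
    have h2' : k'.val / 2 = k.val / 2 + 1 := h2
    have h1' : (N1 : ZMod r) = (N2 : ZMod r) := h1
    have hmin : min (k.val / 2) (k'.val / 2) = k.val / 2 := by omega
    -- the deletion condition forces k odd
    have hodd : k.val % 2 = 1 := by
      by_contra hko
      apply hdel
      refine ⟨h1, ?_⟩
      show Even ((N1 : ZMod r).val + min (k.val / 2) (k'.val / 2))
      rw [hmin, even_val_add hre (by omega), Nat.even_iff]
      omega
    have hmod : N1 ≡ N2 [MOD r] := (ZMod.natCast_eq_natCast_iff _ _ _).mp h1'
    have hmod2 : N1 % 2 = N2 % 2 := modeq_two hre hmod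
    have hkk : k'.val = k.val + 1 := by omega
    have heq : (k'.val + 1) / 2 = (k.val + 1) / 2 := by omega
    rw [hN1, hN2, heq] at hmod
    have := twoc_eq hck hck' (Nat.ModEq.add_right_cancel' _ hmod)
    exact ⟨Fin.ext this, hkk.symm⟩
  · -- horizontal edge: same row, column + 1, even parity
    have h1' : k.val / 2 = k'.val / 2 := congrArg Fin.val h1
    have h3' : Even ((N1 : ZMod r).val + k.val / 2) := h3
    rw [even_val_add hre (by omega), Nat.even_iff] at h3'
    have hkev : k.val % 2 = 0 := by omega
    have h2a : (N2 : ZMod r) = (N1 : ZMod r) + 1 := h2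
    have h2' : (N2 : ZMod r) = ((N1 + 1 : ℕ) : ZMod r) := by
      rw [h2a]; push_cast; ring
    have hmod : N2 ≡ N1 + 1 [MOD r] := (ZMod.natCast_eq_natCast_iff _ _ _).mp h2'
    have hmod2 : N2 % 2 = (N1 + 1) % 2 := modeq_two hre hmod
    have hkk : k'.val = k.val + 1 := by omega
    have heq : (k'.val + 1) / 2 = (k.val + 1) / 2 + 1 := by omega
    rw [hN1, hN2, heq, ← Nat.add_assoc] at hmod
    have hmod' : 2 * c'.val + ((k.val + 1) / 2 + 1) ≡ 2 * c.val + ((k.val + 1) / 2 + 1) [MOD r] := by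
      rw [← Nat.add_assoc, ← Nat.add_assoc]; exact hmod
    have := twoc_eq hck' hck (Nat.ModEq.add_right_cancel' _ hmod')
    exact ⟨Fin.ext this.symm, hkk.symm⟩

/-- Successive points on a path are adjacent. -/
lemma adj_of_succ (hr : 4 ≤ r) (hre : Even r) (x y : Fin (r / 2) × Fin (4 * h + 4))
    (hc : x.1 = y.1) (hk : x.2.val + 1 = y.2.val) :
    (ATdelVertEven r h).Adj (gmap r h x) (gmap r h y) := by
  obtain ⟨c, k⟩ := x
  obtain ⟨c', k'⟩ := y
  cases hc
  replace hk : k.val + 1 = k'.val := hk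
  have hkl : k.val < 4 * h + 4 := k.isLt
  have hkl' : k'.val < 4 * h + 4 := k'.isLt
  set N1 : ℕ := 2 * c.val + (k.val + 1) / 2 with hN1
  set N2 : ℕ := 2 * c.val + (k'.val + 1) / 2 with hN2
  rw [ATdel_adj]
  rcases Nat.even_or_odd k.val with hke | hko
  · -- k even: horizontal edge
    have hke' : k.val % 2 = 0 := Nat.even_iff.mp hke
    have hN : N2 = N1 + 1 := by omega
    have hfst : (gmap r h (c, k)).1 ≠ (gmap r h (c, k')).1 := by
      show (N1 : ZMod r) ≠ (N2 : ZMod r)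
      exact cast_ne hre (by omega)
    refine ⟨⟨?_, ?_⟩, ?_⟩
    · intro hc'; exact hfst (congrArg Prod.fst hc')
    · refine Or.inl (Or.inr ⟨?_, ?_, ?_⟩)
      · exact Fin.ext (show k.val / 2 = k'.val / 2 by omega)
      · show (N2 : ZMod r) = (N1 : ZMod r) + 1
        rw [hN]; push_cast; ring
      · show Even ((N1 : ZMod r).val + k.val / 2)
        rw [even_val_add hre (by omega), Nat.even_iff]
        omega
    · rintro ⟨hc', -⟩; exact hfst hc'
  · -- k odd: vertical edge
    have hko' : k.val % 2 = 1 := Nat.odd_iff.mp hko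
    have hN : N2 = N1 := by omega
    have hsnd : ((gmap r h (c, k)).2 : ℕ) ≠ ((gmap r h (c, k')).2 : ℕ) := by
      show k.val / 2 ≠ k'.val / 2
      omega
    refine ⟨⟨?_, ?_⟩, ?_⟩
    · intro hc'
      exact hsnd (congrArg Fin.val (congrArg Prod.snd hc'))
    · refine Or.inl (Or.inl ⟨?_, ?_⟩)
      · show (N1 : ZMod r) = (N2 : ZMod r)
        rw [hN]
      · show k'.val / 2 = k.val / 2 + 1
        omega
    · rintro ⟨-, hev⟩
      have hev' : Even ((N1 : ZMod r).val + min (k.val / 2) (k'.val / 2)) := hev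
      rw [show min (k.val / 2) (k'.val / 2) = k.val / 2 from by omega] at hev'
      rw [even_val_add hre (by omega), Nat.even_iff] at hev'
      omega

/-- The key adjacency characterization. -/
lemma adj_iff (hr : 4 ≤ r) (hre : Even r) (x y : Fin (r / 2) × Fin (4 * h + 4)) :
    (ATdelVertEven r h).Adj (gmap r h x) (gmap r h y) ↔
      x.1 = y.1 ∧ (x.2.val + 1 = y.2.val ∨ y.2.val + 1 = x.2.val) := by
  constructor
  · intro hadj
    rw [ATdel_adj] at hadj
    obtain ⟨⟨hne, hrel⟩, hdel⟩ := hadj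
    rcases hrel with hrel | hrel
    · have := rel_aux hr hre x y hrel hdel
      exact ⟨this.1, Or.inl this.2⟩
    · have hdel' : ¬ ((gmap r h y).1 = (gmap r h x).1 ∧
          Even ((gmap r h y).1.val + min ((gmap r h y).2 : ℕ) ((gmap r h x).2 : ℕ))) := by
        rintro ⟨ha, hb⟩
        exact hdel ⟨ha.symm, by rw [ha] at hb; rwa [min_comm] at hb⟩
      have := rel_aux hr hre y x hrel hdel'
      exact ⟨this.1.symm, Or.inr this.2⟩
  · rintro ⟨hc, hk | hk⟩
    · exact adj_of_succ hr hre x y hc hk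
    · exact (adj_of_succ hr hre y x hc.symm hk).symm

lemma gmap_bijective (hr : 4 ≤ r) (hre : Even r) : Function.Bijective (gmap r h) := by
  haveI : NeZero r := ⟨by omega⟩
  rw [Fintype.bijective_iff_injective_and_card]
  constructor
  · rintro ⟨c, k⟩ ⟨c', k'⟩ hxy
    have h1 : ((2 * c.val + (k.val + 1) / 2 : ℕ) : ZMod r)
        = ((2 * c'.val + (k'.val + 1) / 2 : ℕ) : ZMod r) := congrArg Prod.fst hxy
    have h2 : k.val / 2 = k'.val / 2 :=
      congrArg Fin.val (congrArg Prod.snd hxy)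
    have hmod := (ZMod.natCast_eq_natCast_iff _ _ _).mp h1
    have hmod2 := modeq_two hre hmod
    have hkk : k.val = k'.val := by omega
    rw [hkk] at hmod
    have hck : 2 * c.val < r := by have := c.isLt; omega
    have hck' : 2 * c'.val < r := by have := c'.isLt; omega
    have := twoc_eq hck hck' (Nat.ModEq.add_right_cancel' _ hmod)
    exact Prod.ext (Fin.ext this) (Fin.ext hkk)
  · obtain ⟨s, hs⟩ := hre
    have hs2 : r / 2 = s := by omega
    rw [Fintype.card_prod, Fintype.card_prod, Fintype.card_fin, Fintype.card_fin,
      ZMod.card, Fintype.card_fin, hs2, hs]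
    ring

lemma reach_zero (hr : 4 ≤ r) (hre : Even r) (c : Fin (r / 2)) (k : Fin (4 * h + 4)) :
    (ATdelVertEven r h).Reachable (gmap r h (c, ⟨0, by omega⟩)) (gmap r h (c, k)) := by
  obtain ⟨n, hn⟩ := k
  induction n with
  | zero => exact SimpleGraph.Reachable.refl _
  | succ m ih =>
    have hm : m < 4 * h + 4 := by omega
    refine (ih hm).trans ?_
    exact (adj_of_succ hr hre (c, ⟨m, hm⟩) (c, ⟨m + 1, hn⟩) rfl rfl).reachable

lemma reach (hr : 4 ≤ r) (hre : Even r) (c : Fin (r / 2)) (k k' : Fin (4 * h + 4)) :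
    (ATdelVertEven r h).Reachable (gmap r h (c, k)) (gmap r h (c, k')) :=
  (reach_zero hr hre c k).symm.trans (reach_zero hr hre c k')

end main
end ATaux

theorem ATdelVertEven_components (r h : ℕ) (hr : 4 ≤ r) (hre : Even r) (hh : 1 ≤ h) :
    Nat.card (ATdelVertEven r h).ConnectedComponent = r / 2 ∧
    ∀ c : (ATdelVertEven r h).ConnectedComponent,
      Nonempty ((ATdelVertEven r h).induce c.supp ≃g SimpleGraph.pathGraph (4 * h + 4)) := by
  classical
  haveI : NeZero r := ⟨by omega⟩
  set G := ATdelVertEven r h with hG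
  have hbij := ATaux.gmap_bijective (h := h) hr hre
  set e : (Fin (r / 2) × Fin (4 * h + 4)) ≃ (ZMod r × Fin (2 * h + 2)) :=
    Equiv.ofBijective _ hbij with he
  set ψ : ZMod r × Fin (2 * h + 2) → Fin (r / 2) := fun v => (e.symm v).1 with hψ
  have hgv : ∀ v, ATaux.gmap r h (e.symm v) = v := fun v => e.apply_symm_apply v
  have key : ∀ u v, G.Adj u v → ψ u = ψ v := by
    intro u v huv
    rw [← hgv u, ← hgv v] at huv
    exact ((ATaux.adj_iff hr hre _ _).mp huv).1
  have keyW : ∀ {u v : ZMod r × Fin (2 * h + 2)} (p : G.Walk u v), ψ u = ψ v := by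
    intro u v p
    induction p with
    | nil => rfl
    | cons ha _ ih => exact (key _ _ ha).trans ih
  set Ψ : G.ConnectedComponent → Fin (r / 2) :=
    SimpleGraph.ConnectedComponent.lift ψ (fun u v p _ => keyW p) with hΨ
  set F : Fin (r / 2) → G.ConnectedComponent :=
    fun c => G.connectedComponentMk (ATaux.gmap r h (c, ⟨0, by omega⟩)) with hF
  have hψg : ∀ x, ψ (ATaux.gmap r h x) = x.1 := by
    intro x
    show (e.symm (e x)).1 = x.1
    rw [e.symm_apply_apply]
  have hΨF : ∀ c, Ψ (F c) = c := fun c => hψg _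
  have hFΨ : ∀ K, F (Ψ K) = K := by
    refine SimpleGraph.ConnectedComponent.ind (fun v => ?_)
    show G.connectedComponentMk (ATaux.gmap r h (ψ v, ⟨0, by omega⟩))
      = G.connectedComponentMk v
    apply SimpleGraph.ConnectedComponent.sound
    have hv : v = ATaux.gmap r h ((e.symm v).1, (e.symm v).2) := (hgv v).symm
    conv_rhs => rw [hv]
    exact ATaux.reach hr hre (ψ v) ⟨0, by omega⟩ (e.symm v).2
  have E : G.ConnectedComponent ≃ Fin (r / 2) := ⟨Ψ, F, hFΨ, hΨF⟩
  constructor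
  · rw [Nat.card_congr E]; simp
  · intro K
    have hmem : ∀ k : Fin (4 * h + 4), ATaux.gmap r h (Ψ K, k) ∈ K.supp := by
      intro k
      rw [SimpleGraph.ConnectedComponent.mem_supp_iff]
      have h1 : G.connectedComponentMk (ATaux.gmap r h (Ψ K, k)) = F (Ψ K) :=
        SimpleGraph.ConnectedComponent.sound (ATaux.reach hr hre _ _ _)
      rw [h1, hFΨ]
    set φ : Fin (4 * h + 4) → K.supp := fun k => ⟨_, hmem k⟩ with hφ
    have hφbij : Function.Bijective φ := by
      constructor
      · intro a b hab
        have h2 := hbij.1 (Subtype.ext_iff.mp hab)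
        exact (Prod.ext_iff.mp h2).2
      · rintro ⟨v, hv⟩
        rw [SimpleGraph.ConnectedComponent.mem_supp_iff] at hv
        refine ⟨(e.symm v).2, ?_⟩
        have h1 : (e.symm v).1 = Ψ K := by rw [← hv]; rfl
        apply Subtype.ext
        show ATaux.gmap r h (Ψ K, (e.symm v).2) = v
        rw [← h1]
        exact hgv v
    refine ⟨SimpleGraph.Iso.symm ⟨Equiv.ofBijective φ hφbij, ?_⟩⟩
    intro a b
    show G.Adj (ATaux.gmap r h (Ψ K, a)) (ATaux.gmap r h (Ψ K, b)) ↔ _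
    rw [ATaux.adj_iff hr hre, SimpleGraph.pathGraph_adj]
    simp
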